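/- arXiv:1611.06974 — 4 statements merged into one kernel-verified Lean document; each statement's English description precedes it below -/
import Mathlib

section
/- Let G be a nontrivial finite group, P a free G-poset, and c : C_P → {1, …, C} a proper coloring of the compatibility graph. Define λ(x) = (g_x^{-1}, c(g_x·x)) as above. If x, y ∈ P are comparable and c(g_x·x) = c(g_y·y), then g_x = g_y. Consequently, λ is order-preserving into the poset G × {1,…,C−|G|+1} ordered by (h,x) < (g,y) iff x < y, i.e., λ maps every chain of P to a set of elements with pairwise distinct second coordinates. -/
/-- The compatibility graph of a `G`-poset `P` (action preserving the strict order):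
vertices are elements of `P`, and `x ~ y` iff `x ≠ y` and there is `g ≠ 1` with
`x` and `g • y` comparable. -/
def compatGraph (G : Type*) {P : Type*} [Group G] [PartialOrder P] [MulAction G P]
    (hm : ∀ g : G, ∀ x y : P, x < y → g • x < g • y) : SimpleGraph P where
  Adj x y := x ≠ y ∧ ∃ g : G, g ≠ 1 ∧ (x ≤ g • y ∨ g • y ≤ x)
  symm := by
    have hmono : ∀ (g : G), Monotone (fun z : P => g • z) := by
      intro g a b hab
      rcases eq_or_lt_of_le hab with h | h
      · simp [h]
      · exact (hm g a b h).le
    constructor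
    rintro x y ⟨hxy, g, hg, h⟩
    refine ⟨hxy.symm, g⁻¹, by simpa using hg, ?_⟩
    rcases h with h | h
    · right
      have := hmono g⁻¹ h
      simpa using this
    · left
      have := hmono g⁻¹ h
      simpa using this
  loopless := ⟨fun x h => h.1 rfl⟩

/-- With `c` a proper coloring of the compatibility graph and `gx x`
the unique minimizing group element, if `x, y` are comparable and
`c (gx x • x) = c (gx y • y)` then `gx x = gx y`.  Consequently the map
`λ x = ((gx x)⁻¹, c (gx x • x))` sends every chain of `P` to a set of elements with
pairwise distinct second coordinates (distinct elements of the image have distinct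
second coordinates). -/
theorem lambda_simplicial
    (G P : Type*) [Group G] [Fintype G] [Nontrivial G] [PartialOrder P] [MulAction G P]
    (hm : ∀ g : G, ∀ x y : P, x < y → g • x < g • y)
    (hfree : ∀ (g : G) (x : P), g • x = x → g = 1)
    (C : ℕ) (c : (compatGraph G hm).Coloring (Fin C))
    (gx : P → G) (hgx : ∀ (x : P) (h : G), c (gx x • x) ≤ c (h • x)) :
    (∀ x y : P, (x ≤ y ∨ y ≤ x) → c (gx x • x) = c (gx y • y) → gx x = gx y) ∧
      (∀ x y : P, (x ≤ y ∨ y ≤ x) →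
        ((((gx x)⁻¹, c (gx x • x)) : G × Fin C) = ((gx y)⁻¹, c (gx y • y)) ∨
          c (gx x • x) ≠ c (gx y • y))) := by
  have hmono : ∀ (g : G), Monotone (fun z : P => g • z) := by
    intro g a b hab
    rcases eq_or_lt_of_le hab with h | h
    · simp [h]
    · exact (hm g a b h).le
  have nostrict : ∀ (g : G) (a : P), ¬ a < g • a := by
    intro g a ha
    have H : ∀ n : ℕ, a < g ^ (n + 1) • a := by
      intro n
      induction n with
      | zero => simpa using ha
      | succ n ih =>
        calc a < g • a := ha
          _ < g • g ^ (n + 1) • a := hm g _ _ ih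
          _ = g ^ (n + 2) • a := by rw [← mul_smul, ← pow_succ']
    have h1 := H (Fintype.card G - 1)
    have hcard : Fintype.card G - 1 + 1 = Fintype.card G :=
      Nat.sub_add_cancel Fintype.card_pos
    rw [hcard, pow_card_eq_one, one_smul] at h1
    exact lt_irrefl a h1
  have key : ∀ x y : P, (x ≤ y ∨ y ≤ x) → c (gx x • x) = c (gx y • y) → gx x = gx y := by
    intro x y hcomp hc
    by_contra hne
    by_cases heq : gx x • x = gx y • y
    · have hxyne : x ≠ y := fun h => hne (by rw [h])
      have hg1 : (gx x * (gx y)⁻¹) • (gx y • y) = gx x • y := by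
        rw [← mul_smul, inv_mul_cancel_right]
      rcases hcomp with h | h
      · have hlt : x < y := lt_of_le_of_ne h hxyne
        have : gx x • x < (gx x * (gx y)⁻¹) • (gx x • x) := by
          conv_rhs => rw [heq, hg1]
          exact hm (gx x) _ _ hlt
        exact nostrict _ _ this
      · have hlt : y < x := lt_of_le_of_ne h (Ne.symm hxyne)
        have h2 : (gx x * (gx y)⁻¹) • (gx x • x) < gx x • x := by
          conv_lhs => rw [heq, hg1]
          exact hm (gx x) _ _ hlt
        have := hm (gx x * (gx y)⁻¹)⁻¹ _ _ h2
        rw [inv_smul_smul] at this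
        exact nostrict _ _ this
    · have hadj : (compatGraph G hm).Adj (gx x • x) (gx y • y) := by
        refine ⟨heq, gx x * (gx y)⁻¹, fun h => hne (mul_inv_eq_one.mp h), ?_⟩
        have hg1 : (gx x * (gx y)⁻¹) • (gx y • y) = gx x • y := by
          rw [← mul_smul, inv_mul_cancel_right]
        rw [hg1]
        rcases hcomp with h | h
        · exact Or.inl (hmono (gx x) h)
        · exact Or.inr (hmono (gx x) h)
      exact c.valid hadj hc
  refine ⟨key, fun x y hcomp => ?_⟩
  by_cases hc : c (gx x • x) = c (gx y • y)
  · exact Or.inl (by have h1 := key x y hcomp hc; exact Prod.ext (by rw [h1]) hc)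
  · exact Or.inr hc
end

section
/- Let G be a nontrivial finite group and P a finite free G-poset. Then every chain in P has length at most the number of colors in any proper coloring of C_P minus |G| plus 1; more precisely, if c : C_P → {1,…,C} is a proper coloring, then the order complex Δ(P) admits a simplicial G-equivariant map into Δ(G × {1,…,C−|G|+1}), a free (C−|G|)-dimensional simplicial G-complex. -/
open scoped BigOperators

/-- Geometric realization of the order complex of a finite poset `Q`, realized as the
set of convex-combination weight functions supported on chains of `Q`. -/
def ordCpxReal (Q : Type*) [PartialOrder Q] [Fintype Q] : Set (Q → ℝ) :=
  {f | (∀ x, 0 ≤ f x) ∧ (∑ x, f x) = 1 ∧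
    ∀ x y, f x ≠ 0 → f y ≠ 0 → (x ≤ y ∨ y ≤ x)}

/-- The `G`-poset `G × {1, …, n+1}` whose order complex is a model for `E_n G`. -/
def EPoset (G : Type*) (n : ℕ) : Type _ := G × Fin (n + 1)

/-- The order `(h, x) < (g, y)` iff `x < y`. -/
instance EPoset.instPartialOrder (G : Type*) (n : ℕ) : PartialOrder (EPoset G n) where
  le a b := a = b ∨ a.2 < b.2
  le_refl a := Or.inl rfl
  le_trans a b c h h' := by
    rcases h with rfl | h
    · exact h'
    · rcases h' with rfl | h'
      · exact Or.inr h
      · exact Or.inr (h.trans h')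
  le_antisymm a b h h' := by
    rcases h with rfl | h
    · rfl
    · rcases h' with rfl | h'
      · rfl
      · exact absurd h' (lt_asymm h)

/-- The action `h • (g, i) = (h * g, i)` of `G` on `G × {1, …, n+1}`. -/
instance EPoset.instFintype (G : Type*) [Fintype G] (n : ℕ) : Fintype (EPoset G n) :=
  instFintypeProd G (Fin (n + 1))

instance EPoset.instSMul (G : Type*) [Group G] (n : ℕ) : SMul G (EPoset G n) :=
  ⟨fun h a => (h * a.1, a.2)⟩

/-- The action of `g ∈ G` on weight functions: `(g • f) q = f (g⁻¹ • q)`. -/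
def shiftFun {G Q : Type*} [Group G] [SMul G Q] (g : G) (f : Q → ℝ) : Q → ℝ :=
  fun q => f (g⁻¹ • q)

/-- There is a continuous `G`-equivariant map from the realization of the order complex
of `P` to the realization of the order complex of `G × {1, …, n+1}` (an `E_n G`
space); this witnesses `ind_G |Δ(P)| ≤ n`. -/
def IndLE (G P : Type*) [Group G] [PartialOrder P] [MulAction G P] [Fintype P]
    [Fintype G] (n : ℕ) : Prop :=
  ∃ F : C(↥(ordCpxReal P), ↥(ordCpxReal (EPoset G n))),
    ∀ (g : G) (f f' : ↥(ordCpxReal P)), (f' : P → ℝ) = shiftFun g (f : P → ℝ) →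
      (F f' : EPoset G n → ℝ) = shiftFun g (F f : EPoset G n → ℝ)

/-- The `G`-index of the realization of the order complex of `P`:
the least `n` for which there is a `G`-equivariant map into an `E_n G` space. -/
noncomputable def indG (G P : Type*) [Group G] [PartialOrder P] [MulAction G P]
    [Fintype P] [Fintype G] : ℕ∞ :=
  sInf ((fun n : ℕ => (n : ℕ∞)) '' {n | IndLE G P n})

/-- A space is `k`-connected if it is nonempty and for every `0 ≤ m ≤ k` every
continuous map `S^m → X` extends to a continuous map `B^{m+1} → X`. -/
def KConnected (X : Type*) [TopologicalSpace X] (k : ℕ) : Prop :=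
  Nonempty X ∧ ∀ m : ℕ, m ≤ k →
    ∀ f : C((Metric.sphere (0 : EuclideanSpace ℝ (Fin (m + 1))) 1 : Set _), X),
      ∃ F : C((Metric.closedBall (0 : EuclideanSpace ℝ (Fin (m + 1))) 1 : Set _), X),
        ∀ (x : EuclideanSpace ℝ (Fin (m + 1)))
          (hx : x ∈ Metric.sphere (0 : EuclideanSpace ℝ (Fin (m + 1))) 1),
          F ⟨x, Metric.sphere_subset_closedBall hx⟩ = f ⟨x, hx⟩

section Aux
variable {G P : Type*} [Group G] [Fintype G] [PartialOrder P] [MulAction G P]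

lemma aux_no_orbit_lt (hm : ∀ g : G, ∀ x y : P, x < y → g • x < g • y)
    (k : G) (x : P) : ¬ x < k • x := by
  intro h
  have key : ∀ n : ℕ, x < k ^ (n + 1) • x := by
    intro n
    induction n with
    | zero => simpa using h
    | succ n ih =>
        have h2 := hm k _ _ ih
        rw [smul_smul] at h2
        have : (k * k ^ (n + 1)) = k ^ (n + 2) := by group
        rw [this] at h2
        exact h.trans h2
  have hcard : 1 ≤ Fintype.card G := Fintype.card_pos
  have := key (Fintype.card G - 1)
  rw [Nat.sub_add_cancel hcard, pow_card_eq_one, one_smul] at this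
  exact lt_irrefl _ this

lemma aux_min'_congr {α : Type*} [LinearOrder α] {s t : Finset α} (h : s = t)
    (hs : s.Nonempty) (ht : t.Nonempty) : s.min' hs = t.min' ht := by
  subst h; rfl

end Aux

/-- Let `G` be a nontrivial finite group, `P` a finite free `G`-poset,
and `c` a proper coloring of `C_P` with `C` colors.  Then the order complex `Δ(P)`
admits a simplicial `G`-equivariant map into `Δ(G × {1, …, C - |G| + 1})`: there is a
`G`-equivariant vertex map `l : P → G × Fin (C - |G| + 1)` taking every chain of `P`
to a chain (hence every simplex to a simplex). -/
theorem exists_equivariant_simplicial_map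
    (G P : Type*) [Group G] [Fintype G] [Nontrivial G] [PartialOrder P] [Fintype P]
    [MulAction G P]
    (hm : ∀ g : G, ∀ x y : P, x < y → g • x < g • y)
    (hfree : ∀ (g : G) (x : P), g • x = x → g = 1)
    (C : ℕ) (c : (compatGraph G hm).Coloring (Fin C)) :
    ∃ l : P → EPoset G (C - Fintype.card G),
      (∀ (g : G) (x : P), l (g • x) = g • l x) ∧
      (∀ x y : P, x ≤ y → (l x ≤ l y ∨ l y ≤ l x)) := by
  classical
  set n := Fintype.card G with hn
  -- the set of colors of an orbit
  set T : P → Finset (Fin C) := fun x => Finset.image (fun g : G => c (g • x)) Finset.univ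
    with hT
  have hTne : ∀ x : P, (T x).Nonempty :=
    fun x => ⟨c ((1 : G) • x), Finset.mem_image_of_mem _ (Finset.mem_univ 1)⟩
  set m : P → Fin C := fun x => (T x).min' (hTne x) with hmdef
  -- the coloring map is injective on each orbit
  have hinj : ∀ x : P, Function.Injective (fun g : G => c (g • x)) := by
    intro x g g' h
    by_contra hne
    have hxx : g • x ≠ g' • x := by
      intro he
      apply hne
      have : (g'⁻¹ * g) • x = x := by rw [mul_smul, he, inv_smul_smul]
      have h1 := hfree _ _ this
      have : g' * (g'⁻¹ * g) = g' * 1 := by rw [h1]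
      simpa [mul_assoc] using this
    have hadj : (compatGraph G hm).Adj (g • x) (g' • x) := by
      refine ⟨hxx, g * g'⁻¹, ?_, Or.inl ?_⟩
      · intro he
        apply hxx
        have : g = g' := by
          have := mul_inv_eq_one.mp he
          exact this
        rw [this]
      · rw [smul_smul, mul_assoc, inv_mul_cancel, mul_one]
    exact c.valid hadj h
  -- unique group element realizing the minimal color of the orbit
  have hexu : ∀ x : P, ∃! g : G, c (g • x) = m x := by
    intro x
    have hmem : m x ∈ T x := Finset.min'_mem _ _
    rw [hT] at hmem
    simp only [Finset.mem_image, Finset.mem_univ, true_and] at hmem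
    obtain ⟨g, hg⟩ := hmem
    exact ⟨g, hg, fun g' hg' => hinj x (show c (g' • x) = c (g • x) by rw [hg', hg])⟩
  set g₀ : P → G := fun x => (hexu x).choose with hg₀
  have hg₀spec : ∀ x : P, c (g₀ x • x) = m x := fun x => (hexu x).choose_spec.1
  have hg₀uniq : ∀ (x : P) (g : G), c (g • x) = m x → g = g₀ x :=
    fun x g h => (hexu x).choose_spec.2 g h
  -- equivariance of T and m
  have hTeq : ∀ (g : G) (x : P), T (g • x) = T x := by
    intro g x
    rw [hT]
    ext t
    simp only [Finset.mem_image, Finset.mem_univ, true_and]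
    constructor
    · rintro ⟨g', rfl⟩; exact ⟨g' * g, by rw [mul_smul]⟩
    · rintro ⟨g', rfl⟩; exact ⟨g' * g⁻¹, by rw [smul_smul, mul_assoc, inv_mul_cancel, mul_one]⟩
  have hmeq : ∀ (g : G) (x : P), m (g • x) = m x := by
    intro g x
    exact aux_min'_congr (hTeq g x) _ _
  have hg₀eq : ∀ (g : G) (x : P), g₀ (g • x) = g₀ x * g⁻¹ := by
    intro g x
    refine (hg₀uniq (g • x) (g₀ x * g⁻¹) ?_).symm
    rw [smul_smul, mul_assoc, inv_mul_cancel, mul_one, hg₀spec, hmeq]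
  -- the bound on the minimal color
  have hbound : ∀ x : P, (m x : ℕ) < C - n + 1 := by
    intro x
    have hcardT : (T x).card = n := by
      rw [hT]
      simp only
      rw [Finset.card_image_of_injective _ (hinj x), Finset.card_univ, hn]
    have hsub : (T x).image Fin.val ⊆ Finset.Ico (m x : ℕ) C := by
      intro t ht
      simp only [Finset.mem_image] at ht
      obtain ⟨t', ht', rfl⟩ := ht
      exact Finset.mem_Ico.mpr ⟨Finset.min'_le _ _ ht', t'.is_lt⟩
    have hcard2 : ((T x).image Fin.val).card = n := by
      rw [Finset.card_image_of_injective _ Fin.val_injective, hcardT]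
    have := Finset.card_le_card hsub
    rw [hcard2, Nat.card_Ico] at this
    have hmx : (m x : ℕ) < C := (m x).is_lt
    omega
  -- the map
  set l : P → EPoset G (C - n) := fun x => ((g₀ x)⁻¹, ⟨(m x : ℕ), hbound x⟩) with hl
  refine ⟨l, ?_, ?_⟩
  · intro g x
    show ((g₀ (g • x))⁻¹, (⟨(m (g • x) : ℕ), hbound _⟩ : Fin (C - n + 1)))
      = (g * (g₀ x)⁻¹, ⟨(m x : ℕ), hbound x⟩)
    have h1 : (g₀ x * g⁻¹)⁻¹ = g * (g₀ x)⁻¹ := by simp [mul_inv_rev]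
    have h2 : (⟨(m (g • x) : ℕ), hbound _⟩ : Fin (C - n + 1)) = ⟨(m x : ℕ), hbound x⟩ :=
      by simp only [Fin.mk.injEq]; exact congrArg Fin.val (hmeq g x)
    rw [hg₀eq, h1, h2]
  · intro x y hxy
    rcases eq_or_lt_of_le hxy with rfl | hlt
    · exact Or.inl le_rfl
    have horb : ∀ k : G, y ≠ k • x := by
      intro k he
      exact aux_no_orbit_lt hm k x (he ▸ hlt)
    by_cases hcm : m x = m y
    · -- in this case l x = l y
      have hgg : g₀ x = g₀ y := by
        by_contra hne
        have hab : g₀ x • x ≠ g₀ y • y := by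
          intro he
          exact horb ((g₀ y)⁻¹ * g₀ x) (by rw [mul_smul, he, inv_smul_smul])
        have hadj : (compatGraph G hm).Adj (g₀ x • x) (g₀ y • y) := by
          refine ⟨hab, g₀ x * (g₀ y)⁻¹, ?_, Or.inl ?_⟩
          · intro he
            exact hne (mul_inv_eq_one.mp he)
          · rw [smul_smul, mul_assoc, inv_mul_cancel, mul_one]
            exact (hm (g₀ x) x y hlt).le
        exact c.valid hadj (by rw [hg₀spec, hg₀spec, hcm])
      left
      have : l x = l y := by
        rw [hl]
        simp only
        have h2 : (⟨(m x : ℕ), hbound x⟩ : Fin (C - n + 1)) = ⟨(m y : ℕ), hbound y⟩ :=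
          by simp only [Fin.mk.injEq]; exact congrArg Fin.val hcm
        rw [hgg, h2]
      exact this ▸ le_rfl
    · -- the second coordinates differ
      rcases lt_or_gt_of_ne (fun h : (m x : ℕ) = (m y : ℕ) => hcm (Fin.ext h)) with h | h
      · exact Or.inl (Or.inr h)
      · exact Or.inr (Or.inr h)
end

section
/- Let H be a graph and r ≥ 2. The cyclic group Z_r acts freely on the Hom poset Hom_p(K_r, H): for the action ω^i·(A_1,…,A_r) = (A_{1+i mod r},…,A_{r+i mod r}), if ω^i·(A_1,…,A_r) = (A_1,…,A_r) for some (A_1,…,A_r) ∈ Hom_p(K_r, H), then i ≡ 0 (mod r). -/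
variable {V : Type*}

/-- The Hom poset `Hom_p(K_r, H)`: `r`-tuples of nonempty subsets of `V(H)` that are
pairwise completely joined in `H`, ordered componentwise by inclusion. -/
def HomK (r : ℕ) (H : SimpleGraph V) : Type _ :=
  {A : Fin r → Finset V // (∀ i, (A i).Nonempty) ∧
    ∀ i j : Fin r, i ≠ j → ∀ a ∈ A i, ∀ b ∈ A j, H.Adj a b}

instance (r : ℕ) (H : SimpleGraph V) : PartialOrder (HomK r H) where
  le A B := ∀ i, A.1 i ⊆ B.1 i
  le_refl A i := subset_rfl
  le_trans A B C h h' i := (h i).trans (h' i)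
  le_antisymm A B h h' := Subtype.ext (funext fun i => subset_antisymm (h i) (h' i))

/-- Cyclic shift by `i` on `Hom_p(K_r, H)`: the action of `ω^i ∈ Z_r`. -/
def HomK.shift {r : ℕ} [NeZero r] {H : SimpleGraph V} (i : Fin r) (A : HomK r H) :
    HomK r H :=
  ⟨fun j => A.1 (j + i), fun j => A.2.1 (j + i), by
    intro j k hjk a ha b hb
    exact A.2.2 (j + i) (k + i) (fun h => hjk (by simpa using add_right_cancel h)) a ha b hb⟩

/-- The compatibility graph of the `Z_r`-poset `Hom_p(K_r, H)` (cyclic shift action):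
`A ~ B` iff `A ≠ B` and `A` is comparable with some nontrivial cyclic shift of `B`. -/
def compatK (r : ℕ) [NeZero r] (H : SimpleGraph V) : SimpleGraph (HomK r H) where
  Adj A B := A ≠ B ∧ ∃ i : Fin r, i ≠ 0 ∧ (A ≤ HomK.shift i B ∨ HomK.shift i B ≤ A)
  symm := by
    have hshift : ∀ (i : Fin r) (A B : HomK r H), A ≤ B → HomK.shift i A ≤ HomK.shift i B :=
      fun i A B h j => h (j + i)
    have hinv : ∀ (i : Fin r) (A : HomK r H), HomK.shift (-i) (HomK.shift i A) = A := by
      intro i A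
      apply Subtype.ext
      funext j
      show A.1 (j + -i + i) = A.1 j
      simp
    refine ⟨?_⟩
    rintro A B ⟨hAB, i, hi, h⟩
    refine ⟨hAB.symm, -i, by simpa using hi, ?_⟩
    rcases h with h | h
    · right
      have := hshift (-i) _ _ h
      rwa [hinv] at this
    · left
      have := hshift (-i) _ _ h
      rwa [hinv] at this
  loopless := ⟨fun A h => h.1 rfl⟩

noncomputable instance (r : ℕ) (H : SimpleGraph V) [Fintype V] : Fintype (HomK r H) := by
  classical exact Subtype.fintype _

/-- For a graph `H` and `r ≥ 2`, the cyclic group `Z_r` acts freely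
on `Hom_p(K_r, H)` by cyclic shift: if the shift by `i` fixes some element, then
`i = 0` in `Z_r`. -/
theorem cyclic_shift_free
    (H : SimpleGraph V) (r : ℕ) [NeZero r] (hr : 2 ≤ r) :
    ∀ (i : Fin r) (A : HomK r H), HomK.shift i A = A → i = 0 := by
  intro i A h
  by_contra hi
  have heq : A.1 i = A.1 0 := by
    have := congrFun (congrArg Subtype.val h) 0
    have h0 : A.1 (0 + i) = A.1 0 := this
    simpa using h0
  obtain ⟨a, ha⟩ := A.2.1 0
  have ha' : a ∈ A.1 i := heq ▸ ha
  exact H.loopless.irrefl a (A.2.2 0 i (fun e => hi e.symm) a ha a ha')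
end

section
/- Let H be a graph, r ≥ 1, and suppose Hom_p(C_{2r}, H) is nonempty. There is a graph homomorphism from C_{Hom_p(C_{2r},H)} (compatibility graph for the reversal Z_2-action) to H, and hence χ(C_{Hom_p(C_{2r},H)}) ≤ χ(H). -/
variable {V : Type*}

instance NeZero.two_mul {r : ℕ} [NeZero r] : NeZero (2 * r) :=
  ⟨by have := NeZero.ne r; omega⟩

/-- The Hom poset `Hom_p(C_n, H)` of the cycle on `n` vertices: `n`-tuples of nonempty
subsets of `V(H)` with `A_i × A_{i+1} ⊆ E(H)` for all `i` (indices mod `n`),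
ordered componentwise by inclusion. -/
def HomC (n : ℕ) [NeZero n] (H : SimpleGraph V) : Type _ :=
  {A : Fin n → Finset V // (∀ i, (A i).Nonempty) ∧
    ∀ i : Fin n, ∀ a ∈ A i, ∀ b ∈ A (i + 1), H.Adj a b}

instance (n : ℕ) [NeZero n] (H : SimpleGraph V) : PartialOrder (HomC n H) where
  le A B := ∀ i, A.1 i ⊆ B.1 i
  le_refl A i := subset_rfl
  le_trans A B C h h' i := (h i).trans (h' i)
  le_antisymm A B h h' := Subtype.ext (funext fun i => subset_antisymm (h i) (h' i))

/-- Reversal of a tuple in `Hom_p(C_n, H)`: the action of the nontrivial element of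
`Z_2` sending `(A_1, …, A_n)` to `(A_n, …, A_1)`. -/
def HomC.rev {n : ℕ} [NeZero n] {H : SimpleGraph V} (A : HomC n H) : HomC n H :=
  ⟨fun j => A.1 (-1 - j), fun j => A.2.1 (-1 - j), by
    intro j a ha b hb
    have h := A.2.2 (-1 - (j + 1))
    have e1 : (-1 - (j + 1)) + 1 = -1 - j := by rw [sub_add_eq_sub_sub, sub_add_cancel]
    rw [e1] at h
    exact (h b hb a ha).symm⟩

/-- The compatibility graph of the `Z_2`-poset `Hom_p(C_n, H)` with the reversal
action: `A ~ B` iff `A ≠ B` and `A` is comparable with the reversal of `B`. -/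
def compatC (n : ℕ) [NeZero n] (H : SimpleGraph V) : SimpleGraph (HomC n H) where
  Adj A B := A ≠ B ∧ (A ≤ HomC.rev B ∨ HomC.rev B ≤ A)
  symm := by
    have hmono : ∀ A B : HomC n H, A ≤ B → HomC.rev A ≤ HomC.rev B :=
      fun A B h j => h (-1 - j)
    have hinv : ∀ A : HomC n H, HomC.rev (HomC.rev A) = A := by
      intro A
      apply Subtype.ext
      funext j
      show A.1 (-1 - (-1 - j)) = A.1 j
      norm_num
    constructor
    rintro A B ⟨hAB, h⟩
    refine ⟨hAB.symm, ?_⟩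
    rcases h with h | h
    · right
      have := hmono _ _ h
      rwa [hinv] at this
    · left
      have := hmono _ _ h
      rwa [hinv] at this
  loopless := ⟨fun A h => h.1 rfl⟩

noncomputable instance (n : ℕ) [NeZero n] (H : SimpleGraph V) [Fintype V] :
    Fintype (HomC n H) := by
  classical exact Subtype.fintype _

/-- For a graph `H` and `r ≥ 1` with `Hom_p(C_{2r}, H)` nonempty,
there is a graph homomorphism from the compatibility graph `C_{Hom_p(C_{2r}, H)}`
(for the reversal `Z_2`-action) to `H`; hence
`χ(C_{Hom_p(C_{2r}, H)}) ≤ χ(H)`. -/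
theorem compatC_hom_to_H
    (H : SimpleGraph V) (r : ℕ) [NeZero r] (hne : Nonempty (HomC (2 * r) H)) :
    Nonempty (compatC (2 * r) H →g H) ∧
      (compatC (2 * r) H).chromaticNumber ≤ H.chromaticNumber := by
  classical
  have hom : compatC (2 * r) H →g H := by
    refine ⟨fun A => (A.2.1 0).choose, ?_⟩
    rintro A B (hAdj : A ≠ B ∧ (A ≤ HomC.rev B ∨ HomC.rev B ≤ A))
    obtain ⟨hAB, h⟩ := hAdj
    have hA : (A.2.1 0).choose ∈ A.1 0 := (A.2.1 0).choose_spec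
    have hB : (B.2.1 0).choose ∈ B.1 0 := (B.2.1 0).choose_spec
    have e : (-1 : Fin (2 * r)) + 1 = 0 := neg_add_cancel 1
    rcases h with h | h
    · have h0 : (A.2.1 0).choose ∈ B.1 (-1) := by
        have := h 0 hA
        simpa [HomC.rev] using this
      have key := B.2.2 (-1)
      rw [e] at key
      exact key _ h0 _ hB
    · have h0 : (B.2.1 0).choose ∈ A.1 (-1) := by
        have := h (-1) (by simpa [HomC.rev] using hB)
        exact this
      have key := A.2.2 (-1)
      rw [e] at key
      exact (key _ h0 _ hA).symm
  refine ⟨⟨hom⟩, SimpleGraph.chromaticNumber_le_of_forall_imp ?_⟩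
  rintro n ⟨C⟩
  exact ⟨C.comp hom⟩
end
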